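/- Let X be a Kohlenbach hyperbolic space with convexity map W satisfying (W1). Let T be a generalized C^q-mapping with constant h ∈ [0,1/2), λ = max{h, h/(1−h)}, and p a fixed point of T. Then the Xu-Noor iterates, given by z_n = W(T x_n, x_n, γ_n), y_n = W(T z_n, x_n, β_n), x_{n+1} = W(T y_n, x_n, α_n) with α_n, β_n, γ_n ∈ [0,1], satisfy d(x_{n+1}, p) ≤ (1 − α_n(1−λ)) · d(x_n, p), and hence, if ∑ α_n = ∞, then d(x_n, p) → 0. -/

import Mathlib

/-- Xu-Noor iterates: step estimate and convergence. -/
theorem stmt_11 {X : Type*} [MetricSpace X] (W : X → X → ℝ → X)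
    (hW : ∀ (u x y : X) (α : ℝ), 0 ≤ α → α ≤ 1 →
      dist u (W x y α) ≤ α * dist u x + (1 - α) * dist u y)
    (T : X → X) (h : ℝ) (hh0 : 0 ≤ h) (hh1 : h < 1/2)
    (hT : ∀ x y : X, dist (T x) (T y) ≤
      h * max (dist x y) (max (dist x (T x) + dist y (T y)) (dist x (T y) + dist y (T x))))
    (p : X) (hp : T p = p)
    (α β γ : ℕ → ℝ) (hα : ∀ n, α n ∈ Set.Icc (0 : ℝ) 1)
    (hβ : ∀ n, β n ∈ Set.Icc (0 : ℝ) 1) (hγ : ∀ n, γ n ∈ Set.Icc (0 : ℝ) 1)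
    (x y z : ℕ → X) (hz : ∀ n, z n = W (T (x n)) (x n) (γ n))
    (hy : ∀ n, y n = W (T (z n)) (x n) (β n))
    (hx : ∀ n, x (n + 1) = W (T (y n)) (x n) (α n)) :
    (∀ n : ℕ, dist (x (n + 1)) p ≤
      (1 - α n * (1 - max h (h / (1 - h)))) * dist (x n) p) ∧
    (Filter.Tendsto (fun n => ∑ k ∈ Finset.range n, α k) Filter.atTop Filter.atTop →
      Filter.Tendsto (fun n => dist (x n) p) Filter.atTop (nhds 0)) := by
  set L : ℝ := max h (h / (1 - h)) with hL
  have h1h : (0:ℝ) < 1 - h := by linarith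
  have hL0 : 0 ≤ L := le_trans hh0 (le_max_left _ _)
  have hL1 : L < 1 := by
    apply max_lt (by linarith)
    rw [div_lt_one h1h]; linarith
  -- contraction toward the fixed point
  have hTp : ∀ u : X, dist (T u) p ≤ L * dist u p := by
    intro u
    have h1 := hT u p
    rw [hp] at h1
    have hm : max (dist u p) (max (dist u (T u) + dist p p) (dist u p + dist p (T u)))
        ≤ dist u p + dist (T u) p := by
      have t1 : dist u (T u) ≤ dist u p + dist p (T u) := dist_triangle _ _ _
      have t2 : dist p (T u) = dist (T u) p := dist_comm _ _
      simp only [dist_self]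
      apply max_le
      · linarith [dist_nonneg (x := T u) (y := p)]
      · apply max_le <;> linarith
    have h2 : dist (T u) p ≤ h * (dist u p + dist (T u) p) :=
      le_trans h1 (mul_le_mul_of_nonneg_left hm hh0)
    have h3 : dist (T u) p ≤ h / (1 - h) * dist u p := by
      rw [div_mul_eq_mul_div, le_div_iff₀ h1h]; nlinarith
    calc dist (T u) p ≤ h / (1 - h) * dist u p := h3
      _ ≤ L * dist u p := mul_le_mul_of_nonneg_right (le_max_right _ _) dist_nonneg
  have hstep : ∀ n : ℕ, dist (x (n + 1)) p ≤ (1 - α n * (1 - L)) * dist (x n) p := by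
    intro n
    obtain ⟨ha0, ha1⟩ := hα n
    obtain ⟨hb0, hb1⟩ := hβ n
    obtain ⟨hc0, hc1⟩ := hγ n
    have dzp : dist (z n) p ≤ dist (x n) p := by
      rw [hz n, dist_comm]
      calc dist p (W (T (x n)) (x n) (γ n))
          ≤ γ n * dist p (T (x n)) + (1 - γ n) * dist p (x n) := hW _ _ _ _ hc0 hc1
        _ ≤ dist (x n) p := by
            have h4 := mul_le_mul_of_nonneg_left (hTp (x n)) hc0
            have h5 : γ n * (L * dist (x n) p) ≤ γ n * dist (x n) p :=
              mul_le_mul_of_nonneg_left (mul_le_of_le_one_left dist_nonneg hL1.le) hc0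
            rw [dist_comm p (T (x n)), dist_comm p (x n)]
            linarith
    have dyp : dist (y n) p ≤ dist (x n) p := by
      rw [hy n, dist_comm]
      calc dist p (W (T (z n)) (x n) (β n))
          ≤ β n * dist p (T (z n)) + (1 - β n) * dist p (x n) := hW _ _ _ _ hb0 hb1
        _ ≤ dist (x n) p := by
            have h4 := mul_le_mul_of_nonneg_left (hTp (z n)) hb0
            have h5 : L * dist (z n) p ≤ dist (x n) p :=
              le_trans (mul_le_of_le_one_left dist_nonneg hL1.le) dzp
            have h6 := mul_le_mul_of_nonneg_left h5 hb0
            rw [dist_comm p (T (z n)), dist_comm p (x n)]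
            linarith
    calc dist (x (n + 1)) p = dist p (W (T (y n)) (x n) (α n)) := by rw [hx n, dist_comm]
      _ ≤ α n * dist p (T (y n)) + (1 - α n) * dist p (x n) := hW _ _ _ _ ha0 ha1
      _ ≤ (1 - α n * (1 - L)) * dist (x n) p := by
          have h5 := mul_le_mul_of_nonneg_left (hTp (y n)) ha0
          have h6 : α n * (L * dist (y n) p) ≤ α n * (L * dist (x n) p) :=
            mul_le_mul_of_nonneg_left (mul_le_mul_of_nonneg_left dyp hL0) ha0
          rw [dist_comm p (T (y n)), dist_comm p (x n)]
          nlinarith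
  refine ⟨hstep, fun hsum => ?_⟩
  -- exponential bound
  have hbound : ∀ n : ℕ, dist (x n) p ≤
      dist (x 0) p * Real.exp (-(1 - L) * ∑ k ∈ Finset.range n, α k) := by
    intro n
    induction n with
    | zero => simp
    | succ n ih =>
        have hstepn := hstep n
        obtain ⟨ha0, ha1⟩ := hα n
        have he : (1 - α n * (1 - L)) ≤ Real.exp (-(1 - L) * α n) := by
          have := Real.add_one_le_exp (-(1 - L) * α n)
          linarith
        have hnn : 0 ≤ 1 - α n * (1 - L) := by nlinarith
        calc dist (x (n + 1)) p ≤ (1 - α n * (1 - L)) * dist (x n) p := hstepn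
          _ ≤ Real.exp (-(1 - L) * α n) *
              (dist (x 0) p * Real.exp (-(1 - L) * ∑ k ∈ Finset.range n, α k)) := by
              apply mul_le_mul he ih dist_nonneg (Real.exp_nonneg _)
          _ = dist (x 0) p * Real.exp (-(1 - L) * ∑ k ∈ Finset.range (n + 1), α k) := by
              rw [Finset.sum_range_succ, mul_add, Real.exp_add]; ring
  have htend : Filter.Tendsto
      (fun n => dist (x 0) p * Real.exp (-(1 - L) * ∑ k ∈ Finset.range n, α k))
      Filter.atTop (nhds 0) := by
    have : Filter.Tendsto (fun n => -(1 - L) * ∑ k ∈ Finset.range n, α k)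
        Filter.atTop Filter.atBot := by
      apply Filter.Tendsto.neg_mul_atTop (by linarith : -(1 - L) < 0) tendsto_const_nhds hsum
    have := Real.tendsto_exp_atBot.comp this
    simpa [Filter.Tendsto] using (this.const_mul (dist (x 0) p)).congr (fun n => by simp) |>.trans
      (by simp [mul_zero])
  refine squeeze_zero (fun n => dist_nonneg) hbound htend
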